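/- arXiv:math/0310012 — 2 statements merged into one kernel-verified Lean document; each statement's English description precedes it below -/
import Mathlib

section
/- Let a, b > 0 and let P ~ Beta(a, b). Then for every z ≥ 0, E[(1+zP)^(-(a+b))] = (1+z)^(-a). -/
open MeasureTheory Real Set

/-- Gamma(a,1) distribution on ℝ (density t^(a-1)e^(-t)/Γ(a) on (0,∞)). -/
noncomputable def gammaM (a : ℝ) : Measure ℝ :=
  (volume.restrict (Ioi (0:ℝ))).withDensity
    (fun t => ENNReal.ofReal (t ^ (a - 1) * Real.exp (-t) / Real.Gamma a))

/-- Beta(a,b) distribution on ℝ (density u^(a-1)(1-u)^(b-1)Γ(a+b)/(Γ(a)Γ(b)) on (0,1)). -/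
noncomputable def betaM (a b : ℝ) : Measure ℝ :=
  (volume.restrict (Ioo (0:ℝ) 1)).withDensity
    (fun u => ENNReal.ofReal
      (u ^ (a - 1) * (1 - u) ^ (b - 1) * Real.Gamma (a + b) / (Real.Gamma a * Real.Gamma b)))

/-- Real Beta integral. -/
lemma real_beta_integral (a b : ℝ) (ha : 0 < a) (hb : 0 < b) :
    ∫ x in Ioo (0:ℝ) 1, x ^ (a - 1) * (1 - x) ^ (b - 1)
      = Real.Gamma a * Real.Gamma b / Real.Gamma (a + b) := by
  have hre : Complex.betaIntegral a b
      = ((∫ x in (0:ℝ)..1, x ^ (a - 1) * (1 - x) ^ (b - 1) : ℝ) : ℂ) := by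
    rw [Complex.betaIntegral, ← intervalIntegral.integral_ofReal]
    refine intervalIntegral.integral_congr fun x hx => ?_
    rw [uIcc_of_le zero_le_one] at hx
    have hx0 : (0:ℝ) ≤ x := hx.1
    have hx1 : (0:ℝ) ≤ 1 - x := by linarith [hx.2]
    push_cast
    rw [Complex.ofReal_cpow hx0, Complex.ofReal_cpow hx1]
    push_cast
    ring
  have key := Complex.Gamma_mul_Gamma_eq_betaIntegral
    (s := (a:ℂ)) (t := (b:ℂ)) (by simpa using ha) (by simpa using hb)
  rw [hre, ← Complex.ofReal_add, Complex.Gamma_ofReal, Complex.Gamma_ofReal,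
    Complex.Gamma_ofReal, ← Complex.ofReal_mul, ← Complex.ofReal_mul] at key
  have key' : Real.Gamma a * Real.Gamma b
      = Real.Gamma (a + b) * ∫ x in (0:ℝ)..1, x ^ (a - 1) * (1 - x) ^ (b - 1) :=
    Complex.ofReal_injective key
  have hG : Real.Gamma (a + b) ≠ 0 := (Real.Gamma_pos_of_pos (by linarith)).ne'
  rw [intervalIntegral.integral_of_le zero_le_one, MeasureTheory.integral_Ioc_eq_integral_Ioo]
    at key'
  field_simp at key' ⊢
  linarith [key']

/-- Scalar Markov–Krein identity: if P ~ Beta(a,b) then E[(1+zP)^(-(a+b))] = (1+z)^(-a). -/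
theorem stmt6 (a b z : ℝ) (ha : 0 < a) (hb : 0 < b) (hz : 0 ≤ z) :
    ∫ u, (1 + z * u) ^ (-(a + b)) ∂(betaM a b) = (1 + z) ^ (-a) := by
  have hz1 : (0:ℝ) < 1 + z := by linarith
  have hden : ∀ u ∈ Ioo (0:ℝ) 1, (0:ℝ) < 1 + z * u := by
    intro u hu
    nlinarith [hu.1, hu.2]
  -- the substitution map
  set φ : ℝ → ℝ := fun u => (1 + z) * u / (1 + z * u) with hφ
  -- change of variables
  have himg : φ '' Ioo 0 1 = Ioo (0:ℝ) 1 := by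
    apply Subset.antisymm
    · rintro v ⟨u, hu, rfl⟩
      have h1 := hden u hu
      constructor
      · exact div_pos (mul_pos hz1 hu.1) h1
      · rw [div_lt_one h1]
        nlinarith [hu.1, hu.2]
    · rintro v hv
      have hd : (0:ℝ) < 1 + z * (1 - v) := by nlinarith [hv.1, hv.2]
      refine ⟨v / (1 + z * (1 - v)), ⟨div_pos hv.1 hd, ?_⟩, ?_⟩
      · rw [div_lt_one hd]; nlinarith [hv.1, hv.2]
      · simp only [hφ]
        rw [div_eq_iff]
        · field_simp
          ring
        · have hq : (0:ℝ) < v / (1 + z * (1 - v)) := div_pos hv.1 hd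
          nlinarith [mul_nonneg hz hq.le]
  have hinj : InjOn φ (Ioo 0 1) := by
    intro u hu v hv h
    have h1 := hden u hu
    have h2 := hden v hv
    simp only [hφ] at h
    rw [div_eq_div_iff h1.ne' h2.ne'] at h
    nlinarith [h]
  have hderiv : ∀ u ∈ Ioo (0:ℝ) 1,
      HasDerivWithinAt φ ((1 + z) / (1 + z * u) ^ 2) (Ioo 0 1) u := by
    intro u hu
    have h1 : HasDerivAt (fun u : ℝ => (1 + z) * u) (1 + z) u := by
      simpa using (hasDerivAt_id u).const_mul (1 + z)
    have h2 : HasDerivAt (fun u : ℝ => 1 + z * u) z u := by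
      have h2' := ((hasDerivAt_id u).const_mul z).const_add (1:ℝ)
      simp only [id_eq, mul_one] at h2'
      exact h2'
    have := h1.div h2 (hden u hu).ne'
    refine HasDerivAt.hasDerivWithinAt ?_
    refine this.congr_deriv ?_
    have h2s : ((1:ℝ) + z * u) ^ 2 ≠ 0 := pow_ne_zero _ (hden u hu).ne'
    ring
  have hcov := MeasureTheory.integral_image_eq_integral_abs_deriv_smul
    (f' := fun u => (1 + z) / (1 + z * u) ^ 2) measurableSet_Ioo hderiv hinj
    (fun v => v ^ (a - 1) * (1 - v) ^ (b - 1))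
  rw [himg] at hcov
  -- simplify the transformed integrand
  have hintegrand : ∀ u ∈ Ioo (0:ℝ) 1,
      |(1 + z) / (1 + z * u) ^ 2| • ((φ u) ^ (a - 1) * (1 - φ u) ^ (b - 1))
        = (1 + z) ^ a * (u ^ (a - 1) * (1 - u) ^ (b - 1) * (1 + z * u) ^ (-(a + b))) := by
    intro u hu
    have h1 := hden u hu
    have hu0 := hu.1
    have hu1 : (0:ℝ) < 1 - u := by linarith [hu.2]
    have habs : |(1 + z) / (1 + z * u) ^ 2| = (1 + z) / (1 + z * u) ^ 2 :=
      abs_of_pos (by positivity)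
    have h1m : 1 - φ u = (1 - u) / (1 + z * u) := by
      simp only [hφ]; field_simp; ring
    have e1 : (φ u) ^ (a - 1) = (1 + z) ^ (a - 1) * u ^ (a - 1) / (1 + z * u) ^ (a - 1) := by
      simp only [hφ]
      rw [Real.div_rpow (by positivity) h1.le, Real.mul_rpow hz1.le hu0.le]
    have e2 : (1 - φ u) ^ (b - 1) = (1 - u) ^ (b - 1) / (1 + z * u) ^ (b - 1) := by
      rw [h1m, Real.div_rpow hu1.le h1.le]
    have e3 : (1 + z * u) ^ (-(a + b))
        = ((1 + z * u) ^ (a - 1) * (1 + z * u) ^ (b - 1) * (1 + z * u) ^ (2:ℕ))⁻¹ := by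
      rw [← Real.rpow_natCast (1 + z * u) 2, ← Real.rpow_add h1, ← Real.rpow_add h1,
        Real.rpow_neg h1.le]
      congr 2
      push_cast
      ring
    have e4 : (1 + z) ^ a = (1 + z) * (1 + z) ^ (a - 1) := by
      have h4 := Real.rpow_add hz1 1 (a - 1)
      rw [Real.rpow_one] at h4
      rw [← h4]
      congr 1
      ring
    have hA : (1 + z * u) ^ (a - 1) ≠ 0 := by positivity
    have hB : (1 + z * u) ^ (b - 1) ≠ 0 := by positivity
    have hC : ((1 + z * u) : ℝ) ^ (2:ℕ) ≠ 0 := by positivity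
    rw [smul_eq_mul, habs, e1, e2, e3, e4]
    field_simp
  rw [MeasureTheory.setIntegral_congr_fun measurableSet_Ioo hintegrand] at hcov
  rw [MeasureTheory.integral_const_mul] at hcov
  -- hcov : ∫ v in Ioo 0 1, v^(a-1)*(1-v)^(b-1) = (1+z)^a * J
  rw [real_beta_integral a b ha hb] at hcov
  set J := ∫ u in Ioo (0:ℝ) 1, u ^ (a - 1) * (1 - u) ^ (b - 1) * (1 + z * u) ^ (-(a + b))
    with hJ
  -- now compute the LHS of the goal
  have hGa := Real.Gamma_pos_of_pos ha
  have hGb := Real.Gamma_pos_of_pos hb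
  have hGab := Real.Gamma_pos_of_pos (show (0:ℝ) < a + b by linarith)
  have hmeas : Measurable fun u : ℝ =>
      (u ^ (a - 1) * (1 - u) ^ (b - 1) * Real.Gamma (a + b)
        / (Real.Gamma a * Real.Gamma b)).toNNReal := by
    fun_prop
  have hlhs : ∫ u, (1 + z * u) ^ (-(a + b)) ∂(betaM a b)
      = Real.Gamma (a + b) / (Real.Gamma a * Real.Gamma b) * J := by
    rw [betaM]
    rw [show (fun u : ℝ => ENNReal.ofReal
        (u ^ (a - 1) * (1 - u) ^ (b - 1) * Real.Gamma (a + b)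
          / (Real.Gamma a * Real.Gamma b)))
        = (fun u : ℝ => ((u ^ (a - 1) * (1 - u) ^ (b - 1) * Real.Gamma (a + b)
          / (Real.Gamma a * Real.Gamma b)).toNNReal : ENNReal)) from rfl]
    rw [integral_withDensity_eq_integral_smul hmeas]
    rw [hJ, ← MeasureTheory.integral_const_mul]
    refine MeasureTheory.setIntegral_congr_fun measurableSet_Ioo fun u hu => ?_
    have hu0 := hu.1
    have hu1 : (0:ℝ) < 1 - u := by linarith [hu.2]
    have hpos : 0 ≤ u ^ (a - 1) * (1 - u) ^ (b - 1) * Real.Gamma (a + b)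
        / (Real.Gamma a * Real.Gamma b) := by positivity
    rw [NNReal.smul_def, smul_eq_mul, Real.coe_toNNReal _ hpos]
    ring
  have hpa : ((1:ℝ) + z) ^ a ≠ 0 := by positivity
  have hJval : (1 + z) ^ (-a) * (Real.Gamma a * Real.Gamma b / Real.Gamma (a + b)) = J := by
    rw [hcov, Real.rpow_neg hz1.le]
    field_simp
  rw [hlhs, ← hJval]
  field_simp
end

section
/- Let θ > 0. Let X ~ Gamma(a,1) with 0 < a < θ (realized as a gamma linear functional), T₁ ~ Gamma(1,1) (standard exponential), B ~ Bernoulli(a/θ), and U ~ Beta(θ,1), all jointly independent. Then U·(X + T₁·B) has the same distribution as X. -/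
open MeasureTheory Real Set

/-- The Bernoulli(p) distribution on ℝ. -/
noncomputable def bernoulliM (p : ℝ) : Measure ℝ :=
  ENNReal.ofReal p • Measure.dirac (1:ℝ) + ENNReal.ofReal (1 - p) • Measure.dirac (0:ℝ)

open scoped ENNReal

namespace Stmt16Aux

/-- density of Gamma(s,1) as a global function -/
noncomputable def G (s : ℝ) : ℝ → ℝ≥0∞ :=
  (Ioi (0:ℝ)).indicator fun t => ENNReal.ofReal (t ^ (s - 1) * Real.exp (-t) / Real.Gamma s)

lemma measurable_G (s : ℝ) : Measurable (G s) := by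
  unfold G
  exact Measurable.indicator (by fun_prop) measurableSet_Ioi

lemma gammaM_eq (s : ℝ) : gammaM s = volume.withDensity (G s) := by
  rw [gammaM, G, withDensity_indicator measurableSet_Ioi]

instance (s : ℝ) : SFinite (gammaM s) := by rw [gammaM_eq]; infer_instance

lemma lintegral_G {s : ℝ} (hs : 0 < s) : ∫⁻ t, G s t = 1 := by
  rw [G, lintegral_indicator measurableSet_Ioi]
  rw [← ofReal_integral_eq_lintegral_ofReal]
  · rw [MeasureTheory.integral_div]
    rw [setIntegral_congr_fun measurableSet_Ioi
      (fun x _ => mul_comm (x ^ (s-1)) (Real.exp (-x)))]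
    rw [← Real.Gamma_eq_integral hs, div_self (Real.Gamma_pos_of_pos hs).ne',
      ENNReal.ofReal_one]
  · exact ((Real.GammaIntegral_convergent hs).congr_fun
      (fun x _ => mul_comm (Real.exp (-x)) (x ^ (s-1))) measurableSet_Ioi).div_const _
  · filter_upwards [ae_restrict_mem measurableSet_Ioi] with x hx
    exact div_nonneg (mul_nonneg (Real.rpow_nonneg (le_of_lt hx) _) (Real.exp_pos _).le)
      (Real.Gamma_pos_of_pos hs).le

lemma isProb_gamma {s : ℝ} (hs : 0 < s) : IsProbabilityMeasure (gammaM s) := by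
  constructor
  rw [gammaM_eq, withDensity_apply _ MeasurableSet.univ, setLIntegral_univ, lintegral_G hs]

/-- density of Beta(θ,1) as a global function -/
noncomputable def Bd (θ : ℝ) : ℝ → ℝ≥0∞ :=
  (Ioo (0:ℝ) 1).indicator fun u => ENNReal.ofReal (θ * u ^ (θ - 1))

lemma measurable_Bd (θ : ℝ) : Measurable (Bd θ) := by
  unfold Bd
  exact Measurable.indicator (by fun_prop) measurableSet_Ioo

lemma betaM_eq {θ : ℝ} (hθ : 0 < θ) : betaM θ 1 = volume.withDensity (Bd θ) := by
  rw [betaM, ← withDensity_indicator measurableSet_Ioo, Bd]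
  congr 1
  funext u
  by_cases hu : u ∈ Ioo (0:ℝ) 1
  · rw [indicator_of_mem hu, indicator_of_mem hu]
    congr 1
    rw [Real.Gamma_one, sub_self, Real.rpow_zero, Real.Gamma_add_one hθ.ne']
    field_simp
  · rw [indicator_of_notMem hu, indicator_of_notMem hu]

instance (θ : ℝ) : SFinite (betaM θ 1) := by rw [betaM]; infer_instance

instance (p : ℝ) : IsFiniteMeasure (bernoulliM p) := by
  constructor
  rw [bernoulliM]
  simp [lt_top_iff_ne_top]

/-- 1-dim change of variables for lintegral -/
lemma lintegral_image_1d {s : Set ℝ} {f f' : ℝ → ℝ} (hs : MeasurableSet s)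
    (hf' : ∀ x ∈ s, HasDerivWithinAt f (f' x) s x) (hf : InjOn f s) (g : ℝ → ℝ≥0∞) :
    ∫⁻ x in f '' s, g x = ∫⁻ x in s, ENNReal.ofReal |f' x| * g (f x) := by
  simpa only [ContinuousLinearMap.det_toSpanSingleton] using
    lintegral_image_eq_lintegral_abs_det_fderiv_mul volume hs
      (fun x hx => (hf' x hx).hasFDerivWithinAt) hf g

lemma prod_smul_right {α β : Type*} [MeasurableSpace α] [MeasurableSpace β]
    (μ : Measure α) (ν : Measure β) [SFinite μ] [SFinite ν] {c : ℝ≥0∞} (hc : c ≠ ∞) :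
    μ.prod (c • ν) = c • μ.prod ν := by
  haveI : SFinite (c • ν) := by rw [← withDensity_const]; infer_instance
  ext s hs
  rw [Measure.prod_apply hs, Measure.smul_apply, Measure.prod_apply hs, smul_eq_mul,
    ← lintegral_const_mul' _ _ hc]
  simp [Measure.smul_apply, smul_eq_mul]

lemma G_ne_top (s : ℝ) (x : ℝ) : G s x ≠ ∞ := by
  unfold G
  by_cases hx : x ∈ Ioi (0:ℝ)
  · rw [indicator_of_mem hx]; exact ENNReal.ofReal_ne_top
  · rw [indicator_of_notMem hx]; exact ENNReal.zero_ne_top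

lemma ind_ne_top {E : Set ℝ} (z : ℝ) : E.indicator (1 : ℝ → ℝ≥0∞) z ≠ ∞ := by
  by_cases hz : z ∈ E
  · rw [indicator_of_mem hz]; exact ENNReal.one_ne_top
  · rw [indicator_of_notMem hz]; exact ENNReal.zero_ne_top

lemma G_eq_zero {s x : ℝ} (hx : ¬ 0 < x) : G s x = 0 := by
  rw [G]; exact indicator_of_notMem hx _

lemma conv_identity {a : ℝ} (ha : 0 < a) (z : ℝ) :
    ∫⁻ y, G a y * G 1 (z - y) = G (a + 1) z := by
  have pointwise : ∀ y : ℝ, G a y * G 1 (z - y)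
      = (Ioo 0 z).indicator (fun y => ENNReal.ofReal
          (y ^ (a - 1) * Real.exp (-z) / Real.Gamma a)) y := by
    intro y
    by_cases hy : y ∈ Ioo 0 z
    · have hy0 : (0:ℝ) < y := hy.1
      have hyz : 0 < z - y := by have := hy.2; linarith
      rw [indicator_of_mem hy, G, G, indicator_of_mem (show y ∈ Ioi (0:ℝ) from hy0),
        indicator_of_mem (show z - y ∈ Ioi (0:ℝ) from hyz)]
      rw [show (1:ℝ) - 1 = 0 by ring, Real.rpow_zero, Real.Gamma_one, one_mul, div_one,
        ← ENNReal.ofReal_mul (by positivity)]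
      congr 1
      rw [show (-z) = (-y) + (-(z - y)) by ring, Real.exp_add]
      ring
    · rw [indicator_of_notMem hy]
      by_cases hy0 : 0 < y
      · have hyz : ¬ (0 < z - y) := by
          intro h
          exact hy ⟨hy0, by linarith⟩
        rw [G_eq_zero hyz, mul_zero]
      · rw [G_eq_zero hy0, zero_mul]
  rw [lintegral_congr pointwise, lintegral_indicator measurableSet_Ioo]
  by_cases hz : 0 < z
  · have hint : IntegrableOn (fun y : ℝ => y ^ (a - 1) * Real.exp (-z) / Real.Gamma a)
        (Ioo 0 z) := by
      have h1 : IntegrableOn (fun y : ℝ => y ^ (a - 1)) (Ioo 0 z) := by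
        have := intervalIntegral.intervalIntegrable_rpow' (a := 0) (b := z)
          (show (-1:ℝ) < a - 1 by linarith)
        exact ((intervalIntegrable_iff_integrableOn_Ioc_of_le hz.le).mp this).mono_set
          Ioo_subset_Ioc_self
      exact (h1.mul_const _).div_const _
    rw [← ofReal_integral_eq_lintegral_ofReal hint]
    · have hI : ∫ y in Ioo 0 z, y ^ (a - 1) ∂volume = z ^ a / a := by
        rw [← integral_Ioc_eq_integral_Ioo, ← intervalIntegral.integral_of_le hz.le,
          integral_rpow (Or.inl (by linarith))]
        rw [Real.zero_rpow (show a - 1 + 1 ≠ 0 by linarith), show a - 1 + 1 = a by ring]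
        ring
      rw [MeasureTheory.integral_div, MeasureTheory.integral_mul_const, hI]
      rw [G, indicator_of_mem (show z ∈ Ioi (0:ℝ) from hz)]
      congr 1
      rw [Real.Gamma_add_one ha.ne', show a + 1 - 1 = a by ring]
      field_simp
    · filter_upwards [ae_restrict_mem measurableSet_Ioo] with y hy
      have hy0 : (0:ℝ) < y := hy.1
      positivity
  · rw [Ioo_eq_empty hz, Measure.restrict_empty, lintegral_zero_measure, G,
      indicator_of_notMem (show z ∉ Ioi (0:ℝ) from hz)]

/-- gamma additivity -/
lemma map_add_gamma {a : ℝ} (ha : 0 < a) :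
    Measure.map (fun p : ℝ × ℝ => p.1 + p.2) ((gammaM a).prod (gammaM 1)) = gammaM (a + 1) := by
  have hF : Measurable (fun p : ℝ × ℝ => p.1 + p.2) := by fun_prop
  ext E hE
  have hS : MeasurableSet ((fun p : ℝ × ℝ => p.1 + p.2) ⁻¹' E) := hF hE
  rw [Measure.map_apply hF hE, gammaM_eq a, gammaM_eq 1, gammaM_eq (a + 1),
    Measure.prod_apply hS]
  have hker : Measurable fun y : ℝ => (volume.withDensity (G 1))
      (Prod.mk y ⁻¹' ((fun p : ℝ × ℝ => p.1 + p.2) ⁻¹' E)) :=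
    measurable_measure_prodMk_left hS
  rw [lintegral_withDensity_eq_lintegral_mul volume (measurable_G a) hker]
  have inner : ∀ y : ℝ, (volume.withDensity (G 1))
      (Prod.mk y ⁻¹' ((fun p : ℝ × ℝ => p.1 + p.2) ⁻¹' E))
      = ∫⁻ z, E.indicator 1 z * G 1 (z - y) := by
    intro y
    have hpre : MeasurableSet ((fun t : ℝ => y + t) ⁻¹' E) := (measurable_const_add y) hE
    have heq : Prod.mk y ⁻¹' ((fun p : ℝ × ℝ => p.1 + p.2) ⁻¹' E)
        = (fun t : ℝ => y + t) ⁻¹' E := rfl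
    rw [heq, withDensity_apply _ hpre, ← lintegral_indicator hpre]
    have hpt : ∀ t : ℝ, ((fun t : ℝ => y + t) ⁻¹' E).indicator (G 1) t
        = E.indicator 1 (y + t) * G 1 ((y + t) - y) := by
      intro t
      rw [add_sub_cancel_left]
      by_cases ht : y + t ∈ E
      · rw [indicator_of_mem (show t ∈ (fun t : ℝ => y + t) ⁻¹' E from ht),
          indicator_of_mem ht, Pi.one_apply, one_mul]
      · rw [indicator_of_notMem (show t ∉ (fun t : ℝ => y + t) ⁻¹' E from ht),
          indicator_of_notMem ht, zero_mul]
    rw [lintegral_congr hpt]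
    exact lintegral_add_left_eq_self (fun z => E.indicator 1 z * G 1 (z - y)) y
  calc ∫⁻ y, ((G a) * fun y => (volume.withDensity (G 1))
          (Prod.mk y ⁻¹' ((fun p : ℝ × ℝ => p.1 + p.2) ⁻¹' E))) y
      = ∫⁻ y, ∫⁻ z, G a y * (E.indicator 1 z * G 1 (z - y)) := by
        apply lintegral_congr
        intro y
        simp only [Pi.mul_apply]
        rw [inner y, lintegral_const_mul' _ _ (G_ne_top a y)]
    _ = ∫⁻ z, ∫⁻ y, G a y * (E.indicator 1 z * G 1 (z - y)) := by
        apply lintegral_lintegral_swap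
        apply Measurable.aemeasurable
        exact ((measurable_G a).comp measurable_fst).mul
          (((measurable_one.indicator hE).comp measurable_snd).mul
            ((measurable_G 1).comp (measurable_snd.sub measurable_fst)))
    _ = ∫⁻ z, E.indicator 1 z * ∫⁻ y, G a y * G 1 (z - y) := by
        apply lintegral_congr
        intro z
        rw [← lintegral_const_mul' _ _ (ind_ne_top z)]
        apply lintegral_congr
        intro y
        ring
    _ = ∫⁻ z, E.indicator 1 z * G (a + 1) z := by
        apply lintegral_congr
        intro z
        rw [conv_identity ha z]
    _ = (volume.withDensity (G (a + 1))) E := by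
        rw [withDensity_apply _ hE, ← lintegral_indicator hE]
        apply lintegral_congr
        intro z
        by_cases hzE : z ∈ E
        · rw [indicator_of_mem hzE, indicator_of_mem hzE, Pi.one_apply, one_mul]
        · rw [indicator_of_notMem hzE, indicator_of_notMem hzE, zero_mul]

/-- density of U * X, U ~ Beta(θ,1), X ~ Gamma(s,1) -/
noncomputable def H (θ s : ℝ) : ℝ → ℝ≥0∞ :=
  (Ioi (0:ℝ)).indicator fun z =>
    ENNReal.ofReal (θ * z ^ (θ - 1) / Real.Gamma s) *
      ∫⁻ y in Ioi z, ENNReal.ofReal (y ^ (s - 1 - θ) * Real.exp (-y))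

lemma Bd_eq_zero {θ u : ℝ} (hu : u ∉ Ioo (0:ℝ) 1) : Bd θ u = 0 := by
  rw [Bd]; exact indicator_of_notMem hu _

lemma Bd_ne_top (θ u : ℝ) : Bd θ u ≠ ∞ := by
  by_cases hu : u ∈ Ioo (0:ℝ) 1
  · rw [Bd, indicator_of_mem hu]; exact ENNReal.ofReal_ne_top
  · rw [Bd_eq_zero hu]; exact ENNReal.zero_ne_top

lemma K_eq {θ s : ℝ} (hθ : 0 < θ) (hs : 0 < s) (z : ℝ) :
    ∫⁻ u, Bd θ u * ENNReal.ofReal u⁻¹ * G s (z / u) = H θ s z := by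
  by_cases hz : 0 < z
  · have pointwise : ∀ u : ℝ, Bd θ u * ENNReal.ofReal u⁻¹ * G s (z / u)
        = (Ioo (0:ℝ) 1).indicator (fun u => ENNReal.ofReal
            (θ * u ^ (θ - 1) * u⁻¹ *
              ((z / u) ^ (s - 1) * Real.exp (-(z / u)) / Real.Gamma s))) u := by
      intro u
      by_cases hu : u ∈ Ioo (0:ℝ) 1
      · have hu0 : (0:ℝ) < u := hu.1
        have hzu : (0:ℝ) < z / u := div_pos hz hu0
        rw [indicator_of_mem hu, Bd, indicator_of_mem hu, G,
          indicator_of_mem (show z / u ∈ Ioi (0:ℝ) from hzu),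
          ← ENNReal.ofReal_mul (by positivity), ← ENNReal.ofReal_mul (by positivity)]
      · rw [indicator_of_notMem hu, Bd_eq_zero hu, zero_mul, zero_mul]
    rw [lintegral_congr pointwise, lintegral_indicator measurableSet_Ioo]
    have himg : (fun y : ℝ => z / y) '' (Ioi z) = Ioo (0:ℝ) 1 := by
      ext u
      constructor
      · rintro ⟨y, hy, rfl⟩
        have hy0 : (0:ℝ) < y := lt_trans hz hy
        exact ⟨div_pos hz hy0, (div_lt_one hy0).mpr hy⟩
      · intro hu
        refine ⟨z / u, ?_, ?_⟩
        · have : z * u < z := mul_lt_of_lt_one_right hz hu.2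
          exact (lt_div_iff₀ hu.1).mpr this
        · field_simp
      
    have hderiv : ∀ y ∈ Ioi z, HasDerivWithinAt (fun y : ℝ => z / y)
        (-(z / y ^ 2)) (Ioi z) y := by
      intro y hy
      have hy0 : (0:ℝ) < y := lt_trans hz hy
      have h := ((hasDerivAt_const y z).div (hasDerivAt_id y) hy0.ne')
      simp only [id_eq] at h
      have e : (0 * y - z * 1) / y ^ 2 = -(z / y ^ 2) := by ring
      rw [e] at h
      exact h.hasDerivWithinAt
    have hinj : InjOn (fun y : ℝ => z / y) (Ioi z) := by
      intro y1 h1 y2 h2 heq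
      have hy1 : (0:ℝ) < y1 := lt_trans hz h1
      have hy2 : (0:ℝ) < y2 := lt_trans hz h2
      field_simp at heq
      linarith
    rw [← himg, lintegral_image_1d measurableSet_Ioi hderiv hinj]
    have hcongr : ∀ y ∈ Ioi z,
        ENNReal.ofReal |(-(z / y ^ 2))| * ENNReal.ofReal
          (θ * (z / y) ^ (θ - 1) * (z / y)⁻¹ *
            ((z / (z / y)) ^ (s - 1) * Real.exp (-(z / (z / y))) / Real.Gamma s))
        = ENNReal.ofReal (θ * z ^ (θ - 1) / Real.Gamma s) *
            ENNReal.ofReal (y ^ (s - 1 - θ) * Real.exp (-y)) := by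
      intro y hy
      have hy0 : (0:ℝ) < y := lt_trans hz hy
      have hGs : (0:ℝ) < Real.Gamma s := Real.Gamma_pos_of_pos hs
      have hcan : z / (z / y) = y := by field_simp
      rw [hcan, abs_neg, abs_of_pos (div_pos hz (pow_pos hy0 2)),
        ← ENNReal.ofReal_mul (by positivity), ← ENNReal.ofReal_mul (by positivity)]
      congr 1
      rw [Real.div_rpow hz.le hy0.le, inv_div]
      have e1 : y ^ (s - 1 - θ) = y ^ (s - 1) / (y ^ (θ - 1) * y) := by
        rw [show y ^ (θ - 1) * y = y ^ θ by
          rw [← Real.rpow_add_one hy0.ne' (θ - 1)]; norm_num,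
          ← Real.rpow_sub hy0]
      rw [e1]
      have h1 : y ^ (θ - 1) ≠ 0 := (Real.rpow_pos_of_pos hy0 _).ne'
      field_simp
    rw [setLIntegral_congr_fun measurableSet_Ioi hcongr,
      lintegral_const_mul' _ _ ENNReal.ofReal_ne_top, H,
      indicator_of_mem (show z ∈ Ioi (0:ℝ) from hz)]
  · have pointwise : ∀ u : ℝ, Bd θ u * ENNReal.ofReal u⁻¹ * G s (z / u) = 0 := by
      intro u
      by_cases hu : u ∈ Ioo (0:ℝ) 1
      · have : ¬ (0 < z / u) := by
          rw [not_lt]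
          exact div_nonpos_iff.mpr (Or.inr ⟨not_lt.mp hz, hu.1.le⟩)
        rw [G_eq_zero this, mul_zero]
      · rw [Bd_eq_zero hu, zero_mul, zero_mul]
    rw [lintegral_congr pointwise, lintegral_zero, H,
      indicator_of_notMem (show z ∉ Ioi (0:ℝ) from hz)]

lemma map_mul_beta {θ s : ℝ} (hθ : 0 < θ) (hs : 0 < s) :
    Measure.map (fun p : ℝ × ℝ => p.1 * p.2) ((betaM θ 1).prod (gammaM s))
      = volume.withDensity (H θ s) := by
  have hF : Measurable (fun p : ℝ × ℝ => p.1 * p.2) := by fun_prop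
  ext E hE
  have hS : MeasurableSet ((fun p : ℝ × ℝ => p.1 * p.2) ⁻¹' E) := hF hE
  rw [Measure.map_apply hF hE, betaM_eq hθ, gammaM_eq s, Measure.prod_apply hS]
  have hker : Measurable fun u : ℝ => (volume.withDensity (G s))
      (Prod.mk u ⁻¹' ((fun p : ℝ × ℝ => p.1 * p.2) ⁻¹' E)) :=
    measurable_measure_prodMk_left hS
  rw [lintegral_withDensity_eq_lintegral_mul volume (measurable_Bd θ) hker]
  have inner : ∀ u : ℝ, 0 < u → (volume.withDensity (G s))
      (Prod.mk u ⁻¹' ((fun p : ℝ × ℝ => p.1 * p.2) ⁻¹' E))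
      = ENNReal.ofReal u⁻¹ * ∫⁻ z, E.indicator 1 z * G s (z / u) := by
    intro u hu
    have hpre : MeasurableSet ((fun t : ℝ => u * t) ⁻¹' E) := (measurable_const_mul u) hE
    have heq : Prod.mk u ⁻¹' ((fun p : ℝ × ℝ => p.1 * p.2) ⁻¹' E)
        = (fun t : ℝ => u * t) ⁻¹' E := rfl
    rw [heq, withDensity_apply _ hpre, ← lintegral_indicator hpre]
    have hpt : ∀ t : ℝ, ((fun t : ℝ => u * t) ⁻¹' E).indicator (G s) t
        = E.indicator 1 (u * t) * G s ((u * t) / u) := by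
      intro t
      rw [mul_div_cancel_left₀ _ hu.ne']
      by_cases ht : u * t ∈ E
      · rw [indicator_of_mem (show t ∈ (fun t : ℝ => u * t) ⁻¹' E from ht),
          indicator_of_mem ht, Pi.one_apply, one_mul]
      · rw [indicator_of_notMem (show t ∉ (fun t : ℝ => u * t) ⁻¹' E from ht),
          indicator_of_notMem ht, zero_mul]
    rw [lintegral_congr hpt]
    have hΨ : Measurable fun z : ℝ => E.indicator 1 z * G s (z / u) :=
      (measurable_one.indicator hE).mul ((measurable_G s).comp (measurable_id.div_const u))
    calc ∫⁻ t, E.indicator 1 (u * t) * G s ((u * t) / u)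
        = ∫⁻ z, E.indicator 1 z * G s (z / u) ∂(Measure.map (fun t : ℝ => u * t) volume) :=
          (lintegral_map hΨ (measurable_const_mul u)).symm
      _ = ENNReal.ofReal u⁻¹ * ∫⁻ z, E.indicator 1 z * G s (z / u) := by
          rw [Real.map_volume_mul_left hu.ne', lintegral_smul_measure,
            abs_of_pos (inv_pos.mpr hu), smul_eq_mul]
  calc ∫⁻ u, ((Bd θ) * fun u => (volume.withDensity (G s))
          (Prod.mk u ⁻¹' ((fun p : ℝ × ℝ => p.1 * p.2) ⁻¹' E))) u
      = ∫⁻ u, ∫⁻ z, Bd θ u * ENNReal.ofReal u⁻¹ * (E.indicator 1 z * G s (z / u)) := by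
        apply lintegral_congr
        intro u
        simp only [Pi.mul_apply]
        by_cases hu : u ∈ Ioo (0:ℝ) 1
        · rw [inner u hu.1, ← mul_assoc,
            lintegral_const_mul' _ _ (ENNReal.mul_ne_top (Bd_ne_top θ u) ENNReal.ofReal_ne_top)]
        · rw [Bd_eq_zero hu]
          simp
    _ = ∫⁻ z, ∫⁻ u, Bd θ u * ENNReal.ofReal u⁻¹ * (E.indicator 1 z * G s (z / u)) := by
        apply lintegral_lintegral_swap
        apply Measurable.aemeasurable
        exact (((measurable_Bd θ).comp measurable_fst).mul
          (ENNReal.measurable_ofReal.comp (measurable_fst.inv))).mul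
          (((measurable_one.indicator hE).comp measurable_snd).mul
            ((measurable_G s).comp (measurable_snd.div measurable_fst)))
    _ = ∫⁻ z, E.indicator 1 z * ∫⁻ u, Bd θ u * ENNReal.ofReal u⁻¹ * G s (z / u) := by
        apply lintegral_congr
        intro z
        rw [← lintegral_const_mul' _ _ (ind_ne_top z)]
        apply lintegral_congr
        intro u
        ring
    _ = ∫⁻ z, E.indicator 1 z * H θ s z := by
        apply lintegral_congr
        intro z
        rw [K_eq hθ hs z]
    _ = (volume.withDensity (H θ s)) E := by
        rw [withDensity_apply _ hE, ← lintegral_indicator hE]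
        apply lintegral_congr
        intro z
        by_cases hzE : z ∈ E
        · rw [indicator_of_mem hzE, indicator_of_mem hzE, Pi.one_apply, one_mul]
        · rw [indicator_of_notMem hzE, indicator_of_notMem hzE, zero_mul]

lemma H_combination {θ a : ℝ} (hθ : 0 < θ) (ha : 0 < a) (haθ : a < θ) (z : ℝ) :
    ENNReal.ofReal (a / θ) * H θ (a + 1) z + ENNReal.ofReal (1 - a / θ) * H θ a z = G a z := by
  by_cases hz : z ∈ Ioi (0:ℝ)
  · have hz0 : 0 < z := hz
    have hGa := Real.Gamma_pos_of_pos ha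
    rw [H, H, G, indicator_of_mem hz, indicator_of_mem hz, indicator_of_mem hz]
    set g' : ℝ → ℝ := fun y =>
      (θ - a) * (y ^ (a - 1 - θ) * Real.exp (-y)) + y ^ (a + 1 - 1 - θ) * Real.exp (-y) with hg'
    have hderiv : ∀ y ∈ Ici z, HasDerivAt (fun y => -(y ^ (a - θ) * Real.exp (-y))) (g' y) y := by
      intro y hy
      have hy0 : 0 < y := lt_of_lt_of_le hz0 hy
      have h1 : HasDerivAt (fun y : ℝ => y ^ (a - θ)) ((a - θ) * y ^ (a - θ - 1)) y :=
        Real.hasDerivAt_rpow_const (Or.inl hy0.ne')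
      have h2 : HasDerivAt (fun y : ℝ => Real.exp (-y)) (Real.exp (-y) * (-1)) y :=
        HasDerivAt.exp (hasDerivAt_neg y)
      have := (h1.mul h2).neg
      refine this.congr_deriv ?_
      have e1 : a - θ - 1 = a - 1 - θ := by ring
      have e2 : a + 1 - 1 - θ = a - θ := by ring
      rw [hg', e1, e2]
      ring
    have hnonneg : ∀ y ∈ Ioi z, 0 ≤ g' y := by
      intro y hy
      have hy0 : 0 < y := lt_trans hz0 hy
      have := Real.rpow_nonneg hy0.le (a - 1 - θ)
      have := Real.rpow_nonneg hy0.le (a + 1 - 1 - θ)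
      have := (Real.exp_pos (-y)).le
      have : (0:ℝ) ≤ θ - a := by linarith
      positivity
    have htend : Filter.Tendsto (fun y => -(y ^ (a - θ) * Real.exp (-y)))
        Filter.atTop (nhds 0) := by
      have := (tendsto_rpow_mul_exp_neg_mul_atTop_nhds_zero (a - θ) 1 one_pos).neg
      simp only [neg_mul, one_mul, neg_zero] at this
      exact this
    have hint : IntegrableOn g' (Ioi z) :=
      integrableOn_Ioi_deriv_of_nonneg' hderiv hnonneg htend
    have hFTC : ∫ y in Ioi z, g' y = z ^ (a - θ) * Real.exp (-z) := by
      rw [integral_Ioi_of_hasDerivAt_of_nonneg' hderiv hnonneg htend]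
      ring
    have key : ENNReal.ofReal (θ - a) *
          (∫⁻ y in Ioi z, ENNReal.ofReal (y ^ (a - 1 - θ) * Real.exp (-y))) +
          (∫⁻ y in Ioi z, ENNReal.ofReal (y ^ (a + 1 - 1 - θ) * Real.exp (-y)))
        = ENNReal.ofReal (z ^ (a - θ) * Real.exp (-z)) := by
      rw [← lintegral_const_mul' _ _ ENNReal.ofReal_ne_top,
        ← lintegral_add_left (by fun_prop)]
      rw [← hFTC, ofReal_integral_eq_lintegral_ofReal hint
        ((ae_restrict_mem measurableSet_Ioi).mono fun y hy => hnonneg y hy)]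
      apply lintegral_congr_ae
      filter_upwards [ae_restrict_mem measurableSet_Ioi] with y hy
      have hy0 : 0 < y := lt_trans hz0 hy
      rw [hg', ← ENNReal.ofReal_mul (by linarith), ← ENNReal.ofReal_add]
      · exact mul_nonneg (by linarith)
          (mul_nonneg (Real.rpow_nonneg hy0.le _) (Real.exp_pos _).le)
      · exact mul_nonneg (Real.rpow_nonneg hy0.le _) (Real.exp_pos _).le
    have c1 : ENNReal.ofReal (a / θ) * ENNReal.ofReal (θ * z ^ (θ - 1) / Real.Gamma (a + 1))
        = ENNReal.ofReal (z ^ (θ - 1) / Real.Gamma a) := by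
      rw [← ENNReal.ofReal_mul (by positivity)]
      congr 1
      rw [Real.Gamma_add_one ha.ne']
      field_simp
    have c2 : ENNReal.ofReal (1 - a / θ) * ENNReal.ofReal (θ * z ^ (θ - 1) / Real.Gamma a)
        = ENNReal.ofReal (z ^ (θ - 1) / Real.Gamma a) * ENNReal.ofReal (θ - a) := by
      rw [← ENNReal.ofReal_mul (by
        have : a / θ ≤ 1 := (div_le_one hθ).mpr haθ.le
        linarith), ← ENNReal.ofReal_mul (by positivity)]
      congr 1
      field_simp
    calc ENNReal.ofReal (a / θ) * (ENNReal.ofReal (θ * z ^ (θ - 1) / Real.Gamma (a + 1)) *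
            (∫⁻ y in Ioi z, ENNReal.ofReal (y ^ (a + 1 - 1 - θ) * Real.exp (-y)))) +
          ENNReal.ofReal (1 - a / θ) * (ENNReal.ofReal (θ * z ^ (θ - 1) / Real.Gamma a) *
            (∫⁻ y in Ioi z, ENNReal.ofReal (y ^ (a - 1 - θ) * Real.exp (-y))))
        = ENNReal.ofReal (z ^ (θ - 1) / Real.Gamma a) *
            (ENNReal.ofReal (θ - a) *
              (∫⁻ y in Ioi z, ENNReal.ofReal (y ^ (a - 1 - θ) * Real.exp (-y))) +
             (∫⁻ y in Ioi z, ENNReal.ofReal (y ^ (a + 1 - 1 - θ) * Real.exp (-y)))) := by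
          rw [← mul_assoc, ← mul_assoc, c1, c2, mul_add, mul_assoc]
          ring
      _ = ENNReal.ofReal (z ^ (θ - 1) / Real.Gamma a) *
            ENNReal.ofReal (z ^ (a - θ) * Real.exp (-z)) := by rw [key]
      _ = ENNReal.ofReal (z ^ (a - 1) * Real.exp (-z) / Real.Gamma a) := by
          rw [← ENNReal.ofReal_mul (by positivity)]
          congr 1
          rw [div_mul_eq_mul_div, ← mul_assoc, ← Real.rpow_add hz0]
          ring_nf
  · rw [H, H, G, indicator_of_notMem hz, indicator_of_notMem hz, indicator_of_notMem hz]
    simp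

lemma measurable_H (θ s : ℝ) : Measurable (H θ s) := by
  unfold H
  apply Measurable.indicator _ measurableSet_Ioi
  apply Measurable.mul (by fun_prop)
  have hanti : Antitone fun z => ∫⁻ y in Ioi z,
      ENNReal.ofReal (y ^ (s - 1 - θ) * Real.exp (-y)) :=
    fun z1 z2 h => lintegral_mono_set (Ioi_subset_Ioi h)
  exact hanti.measurable

lemma smul_withDensity (c : ℝ≥0∞) {f : ℝ → ℝ≥0∞} (hf : Measurable f) :
    c • volume.withDensity f = volume.withDensity fun z => c * f z := by
  rw [← withDensity_smul c hf]
  rfl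

end Stmt16Aux

open Stmt16Aux in
/-- Fixed-point identity for gamma linear functionals (Proposition 4.1(iv), two-point case):
U·(X + T₁·B) =_d X where X ~ Gamma(a,1), T₁ ~ Gamma(1,1), B ~ Bernoulli(a/θ),
U ~ Beta(θ,1), jointly independent, 0 < a < θ. -/
theorem stmt16 (θ a : ℝ) (hθ : 0 < θ) (ha : 0 < a) (haθ : a < θ) :
    Measure.map (fun w : ℝ × ℝ × ℝ × ℝ => w.1 * (w.2.1 + w.2.2.1 * w.2.2.2))
        ((betaM θ 1).prod ((gammaM a).prod ((gammaM 1).prod (bernoulliM (a / θ)))))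
      = gammaM a := by
  set p : ℝ := a / θ with hp
  have hF : Measurable (fun w : ℝ × ℝ × ℝ × ℝ => w.1 * (w.2.1 + w.2.2.1 * w.2.2.2)) := by
    fun_prop
  have hmul : Measurable (fun q : ℝ × ℝ => q.1 * q.2) := by fun_prop
  haveI hP1 : IsProbabilityMeasure (gammaM 1) := isProb_gamma one_pos
  haveI hPa : IsProbabilityMeasure (gammaM a) := isProb_gamma ha
  have g1 : Measurable (fun x : ℝ => (x, (1:ℝ))) := by fun_prop
  have g0 : Measurable (fun x : ℝ => (x, (0:ℝ))) := by fun_prop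
  haveI i1 : IsProbabilityMeasure (Measure.map (fun x : ℝ => (x, (1:ℝ))) (gammaM 1)) :=
    Measure.isProbabilityMeasure_map g1.aemeasurable
  haveI i0 : IsProbabilityMeasure (Measure.map (fun x : ℝ => (x, (0:ℝ))) (gammaM 1)) :=
    Measure.isProbabilityMeasure_map g0.aemeasurable
  haveI : SFinite (ENNReal.ofReal p • Measure.dirac (1:ℝ)) := by
    rw [← withDensity_const]; infer_instance
  haveI : SFinite (ENNReal.ofReal (1 - p) • Measure.dirac (0:ℝ)) := by
    rw [← withDensity_const]; infer_instance
  have step1 : (gammaM 1).prod (bernoulliM p)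
      = ENNReal.ofReal p • Measure.map (fun x : ℝ => (x, (1:ℝ))) (gammaM 1)
        + ENNReal.ofReal (1 - p) • Measure.map (fun x : ℝ => (x, (0:ℝ))) (gammaM 1) := by
    rw [bernoulliM, Measure.prod_add, prod_smul_right _ _ ENNReal.ofReal_ne_top,
      prod_smul_right _ _ ENNReal.ofReal_ne_top, Measure.prod_dirac, Measure.prod_dirac]
  haveI : SFinite (ENNReal.ofReal p • Measure.map (fun x : ℝ => (x, (1:ℝ))) (gammaM 1)) := by
    rw [← withDensity_const]; infer_instance
  haveI : SFinite (ENNReal.ofReal (1 - p) •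
      Measure.map (fun x : ℝ => (x, (0:ℝ))) (gammaM 1)) := by
    rw [← withDensity_const]; infer_instance
  have e21 : (gammaM a).prod (Measure.map (fun x : ℝ => (x, (1:ℝ))) (gammaM 1))
      = Measure.map (Prod.map (id : ℝ → ℝ) (fun x : ℝ => (x, (1:ℝ))))
          ((gammaM a).prod (gammaM 1)) := by
    rw [← Measure.map_prod_map _ _ measurable_id g1, Measure.map_id]
  have e20 : (gammaM a).prod (Measure.map (fun x : ℝ => (x, (0:ℝ))) (gammaM 1))
      = Measure.map (Prod.map (id : ℝ → ℝ) (fun x : ℝ => (x, (0:ℝ))))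
          ((gammaM a).prod (gammaM 1)) := by
    rw [← Measure.map_prod_map _ _ measurable_id g0, Measure.map_id]
  have step2 : (gammaM a).prod ((gammaM 1).prod (bernoulliM p))
      = ENNReal.ofReal p • Measure.map (Prod.map (id : ℝ → ℝ) (fun x : ℝ => (x, (1:ℝ))))
          ((gammaM a).prod (gammaM 1))
        + ENNReal.ofReal (1 - p) • Measure.map (Prod.map (id : ℝ → ℝ) (fun x : ℝ => (x, (0:ℝ))))
          ((gammaM a).prod (gammaM 1)) := by
    rw [step1, Measure.prod_add, prod_smul_right _ _ ENNReal.ofReal_ne_top,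
      prod_smul_right _ _ ENNReal.ofReal_ne_top, e21, e20]
  set m1 := Measure.map (Prod.map (id : ℝ → ℝ) (fun x : ℝ => (x, (1:ℝ))))
    ((gammaM a).prod (gammaM 1)) with hm1
  set m0 := Measure.map (Prod.map (id : ℝ → ℝ) (fun x : ℝ => (x, (0:ℝ))))
    ((gammaM a).prod (gammaM 1)) with hm0
  have hg21 : Measurable (Prod.map (id : ℝ → ℝ) (fun x : ℝ => (x, (1:ℝ)))) :=
    measurable_id.prodMap g1
  have hg20 : Measurable (Prod.map (id : ℝ → ℝ) (fun x : ℝ => (x, (0:ℝ)))) :=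
    measurable_id.prodMap g0
  haveI : IsProbabilityMeasure ((gammaM a).prod (gammaM 1)) := by infer_instance
  haveI j1 : IsProbabilityMeasure m1 := Measure.isProbabilityMeasure_map hg21.aemeasurable
  haveI j0 : IsProbabilityMeasure m0 := Measure.isProbabilityMeasure_map hg20.aemeasurable
  have e31 : (betaM θ 1).prod m1
      = Measure.map (Prod.map (id : ℝ → ℝ) (Prod.map (id : ℝ → ℝ) (fun x : ℝ => (x, (1:ℝ)))))
          ((betaM θ 1).prod ((gammaM a).prod (gammaM 1))) := by
    rw [hm1, ← Measure.map_prod_map _ _ measurable_id hg21, Measure.map_id]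
  have e30 : (betaM θ 1).prod m0
      = Measure.map (Prod.map (id : ℝ → ℝ) (Prod.map (id : ℝ → ℝ) (fun x : ℝ => (x, (0:ℝ)))))
          ((betaM θ 1).prod ((gammaM a).prod (gammaM 1))) := by
    rw [hm0, ← Measure.map_prod_map _ _ measurable_id hg20, Measure.map_id]
  have step3 : (betaM θ 1).prod ((gammaM a).prod ((gammaM 1).prod (bernoulliM p)))
      = ENNReal.ofReal p • Measure.map
          (Prod.map (id : ℝ → ℝ) (Prod.map (id : ℝ → ℝ) (fun x : ℝ => (x, (1:ℝ)))))
          ((betaM θ 1).prod ((gammaM a).prod (gammaM 1)))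
        + ENNReal.ofReal (1 - p) • Measure.map
          (Prod.map (id : ℝ → ℝ) (Prod.map (id : ℝ → ℝ) (fun x : ℝ => (x, (0:ℝ)))))
          ((betaM θ 1).prod ((gammaM a).prod (gammaM 1))) := by
    rw [step2, Measure.prod_add, prod_smul_right _ _ ENNReal.ofReal_ne_top,
      prod_smul_right _ _ ENNReal.ofReal_ne_top, e31, e30]
  rw [step3, Measure.map_add _ _ hF, Measure.map_smul, Measure.map_smul,
    Measure.map_map hF (measurable_id.prodMap hg21),
    Measure.map_map hF (measurable_id.prodMap hg20)]
  have comp1 : (fun w : ℝ × ℝ × ℝ × ℝ => w.1 * (w.2.1 + w.2.2.1 * w.2.2.2))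
        ∘ (Prod.map (id : ℝ → ℝ) (Prod.map (id : ℝ → ℝ) (fun x : ℝ => (x, (1:ℝ)))))
      = (fun q : ℝ × ℝ => q.1 * q.2)
        ∘ (Prod.map (id : ℝ → ℝ) (fun p : ℝ × ℝ => p.1 + p.2)) := by
    funext w
    simp [Prod.map]
  have comp0 : (fun w : ℝ × ℝ × ℝ × ℝ => w.1 * (w.2.1 + w.2.2.1 * w.2.2.2))
        ∘ (Prod.map (id : ℝ → ℝ) (Prod.map (id : ℝ → ℝ) (fun x : ℝ => (x, (0:ℝ)))))
      = (fun q : ℝ × ℝ => q.1 * q.2)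
        ∘ (Prod.map (id : ℝ → ℝ) (Prod.fst : ℝ × ℝ → ℝ)) := by
    funext w
    simp [Prod.map]
  rw [comp1, comp0]
  have hadd : Measurable (fun p : ℝ × ℝ => p.1 + p.2) := by fun_prop
  have eadd : Measure.map (Prod.map (id : ℝ → ℝ) (fun p : ℝ × ℝ => p.1 + p.2))
        ((betaM θ 1).prod ((gammaM a).prod (gammaM 1)))
      = (betaM θ 1).prod (gammaM (a + 1)) := by
    rw [← Measure.map_prod_map _ _ measurable_id hadd, Measure.map_id, map_add_gamma ha]
  have efst : Measure.map (Prod.map (id : ℝ → ℝ) (Prod.fst : ℝ × ℝ → ℝ))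
        ((betaM θ 1).prod ((gammaM a).prod (gammaM 1)))
      = (betaM θ 1).prod (gammaM a) := by
    rw [← Measure.map_prod_map _ _ measurable_id measurable_fst, Measure.map_id,
      Measure.map_fst_prod, measure_univ, one_smul]
  rw [← Measure.map_map hmul (measurable_id.prodMap hadd),
    ← Measure.map_map hmul (measurable_id.prodMap measurable_fst),
    eadd, efst, map_mul_beta hθ (by linarith : (0:ℝ) < a + 1), map_mul_beta hθ ha,
    gammaM_eq a, smul_withDensity _ (measurable_H θ (a + 1)),
    smul_withDensity _ (measurable_H θ a),
    ← withDensity_add_left ((measurable_H θ (a + 1)).const_mul _)]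
  congr 1
  funext z
  simpa using H_combination hθ ha haθ z
end
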